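/- Let θ > 3. The dispersion relation ω(k) := √(α̂(k)) is differentiable at every k ∈ (0, 1/2), with ω'(k) = α̂'(k)/(2√(α̂(k))) where α̂'(k) = 4π·Σ_{x=1}^∞ sin(2πkx)/x^{θ−1}, and lim_{k→0+} ω'(k) = √(C(θ)), where C(θ) := 4π²·Σ_{x=1}^∞ x^{2−θ}. -/

import Mathlib

noncomputable section
open Real

/-- `α̂(k) = 4 Σ_{x≥1} sin²(πkx)/x^θ`, the Fourier transform of the long-range coupling. -/
def ahat (θ k : ℝ) : ℝ := 4 * ∑' x : ℕ, sin (π * k * ((x : ℝ) + 1)) ^ 2 / ((x : ℝ) + 1) ^ θ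

/-- The dispersion relation `ω(k) = √(α̂(k))`. -/
def disp (θ k : ℝ) : ℝ := Real.sqrt (ahat θ k)

/-- `α̂'(k) = 4π Σ_{x≥1} sin(2πkx)/x^{θ-1}`. -/
def ahatD (θ k : ℝ) : ℝ := 4 * π * ∑' x : ℕ, sin (2 * π * k * ((x : ℝ) + 1)) / ((x : ℝ) + 1) ^ (θ - 1)

/-- `C(θ) = 4π² Σ_{x≥1} x^{2-θ}` for `θ > 3`. -/
def Cθ3 (θ : ℝ) : ℝ := 4 * π ^ 2 * ∑' x : ℕ, ((x : ℝ) + 1) ^ (2 - θ)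

open Filter Topology

lemma base_pos (x : ℕ) : (0:ℝ) < (x:ℝ) + 1 := by positivity

lemma summable_rpow_shift {p : ℝ} (hp : 1 < p) :
    Summable (fun x : ℕ => ((x:ℝ)+1) ^ (-p)) := by
  have h : Summable (fun n : ℕ => (n:ℝ) ^ (-p)) :=
    Real.summable_nat_rpow.mpr (by linarith)
  have h2 := (summable_nat_add_iff 1).mpr h
  apply h2.congr
  intro n; push_cast; ring_nf

lemma hasDerivAt_term (θ : ℝ) (x : ℕ) (k : ℝ) :
    HasDerivAt (fun k => sin (π * k * ((x:ℝ)+1)) ^ 2 / ((x:ℝ)+1) ^ θ)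
      (π * sin (2 * π * k * ((x:ℝ)+1)) / ((x:ℝ)+1) ^ (θ-1)) k := by
  have hb := base_pos x
  have h1 : HasDerivAt (fun k : ℝ => π * k * ((x:ℝ)+1)) (π * ((x:ℝ)+1)) k := by
    simpa using ((hasDerivAt_id k).const_mul π).mul_const ((x:ℝ)+1)
  have h2 := (h1.sin.pow 2).div_const (((x:ℝ)+1) ^ θ)
  refine HasDerivAt.congr_deriv h2 ?_
  have hr : ((x:ℝ)+1) ^ (θ-1) = ((x:ℝ)+1) ^ θ / ((x:ℝ)+1) := by
    rw [Real.rpow_sub hb, Real.rpow_one]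
  rw [show 2*π*k*((x:ℝ)+1) = 2*(π*k*((x:ℝ)+1)) by ring, Real.sin_two_mul, hr]
  have hd : ((x:ℝ)+1) ^ θ ≠ 0 := (Real.rpow_pos_of_pos hb θ).ne'
  field_simp; ring

lemma ahat_hasDerivAt {θ : ℝ} (hθ : 3 < θ) (k : ℝ) :
    HasDerivAt (ahat θ) (ahatD θ k) k := by
  have key := hasDerivAt_tsum
    (u := fun x : ℕ => π * ((x:ℝ)+1) ^ (-(θ-1)))
    (g := fun (x : ℕ) (k : ℝ) => sin (π * k * ((x:ℝ)+1)) ^ 2 / ((x:ℝ)+1) ^ θ)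
    (g' := fun (x : ℕ) (k : ℝ) => π * sin (2 * π * k * ((x:ℝ)+1)) / ((x:ℝ)+1) ^ (θ-1))
    (y₀ := 0)
    ((summable_rpow_shift (by linarith : 1 < θ - 1)).mul_left π)
    (fun x y => hasDerivAt_term θ x y)
    (by
      intro x y
      have hb := base_pos x
      have hd : (0:ℝ) < ((x:ℝ)+1) ^ (θ-1) := Real.rpow_pos_of_pos hb _
      show ‖π * sin (2*π*y*((x:ℝ)+1)) / ((x:ℝ)+1)^(θ-1)‖ ≤ π * ((x:ℝ)+1) ^ (-(θ-1))
      rw [Real.rpow_neg hb.le]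
      rw [Real.norm_eq_abs, abs_div, abs_of_pos hd, abs_mul, abs_of_pos Real.pi_pos]
      calc π * |sin (2*π*y*((x:ℝ)+1))| / ((x:ℝ)+1)^(θ-1)
          ≤ π * 1 / ((x:ℝ)+1)^(θ-1) := by gcongr; exact Real.abs_sin_le_one _
        _ = π * (((x:ℝ)+1)^(θ-1))⁻¹ := by rw [mul_one, div_eq_mul_inv])
    (by simpa using summable_zero) k
  have key4 := key.const_mul (4 : ℝ)
  have hv : ahatD θ k = 4 * ∑' x : ℕ, π * sin (2*π*k*((x:ℝ)+1)) / ((x:ℝ)+1)^(θ-1) := by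
    rw [ahatD]
    rw [show (fun x : ℕ => π * sin (2*π*k*((x:ℝ)+1)) / ((x:ℝ)+1)^(θ-1))
        = (fun x : ℕ => π * (sin (2*π*k*((x:ℝ)+1)) / ((x:ℝ)+1)^(θ-1))) from
        funext fun x => mul_div_assoc _ _ _, tsum_mul_left, ← mul_assoc]
  rw [hv]
  exact key4

lemma ahat_term_summable {θ : ℝ} (hθ : 3 < θ) (k : ℝ) :
    Summable (fun x : ℕ => sin (π * k * ((x:ℝ)+1)) ^ 2 / ((x:ℝ)+1) ^ θ) := by
  apply (summable_rpow_shift (by linarith : 1 < θ)).of_nonneg_of_le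
  · intro x; positivity
  · intro x
    have hb := base_pos x
    have hd : (0:ℝ) < ((x:ℝ)+1) ^ θ := Real.rpow_pos_of_pos hb _
    rw [Real.rpow_neg hb.le, ← one_div]
    gcongr
    exact Real.sin_sq_le_one _

lemma ahat_nonneg (θ k : ℝ) : 0 ≤ ahat θ k := by
  rw [ahat]
  have : 0 ≤ ∑' x : ℕ, sin (π * k * ((x:ℝ)+1)) ^ 2 / ((x:ℝ)+1) ^ θ :=
    tsum_nonneg fun x => by positivity
  linarith

lemma ahat_pos {θ : ℝ} (hθ : 3 < θ) {k : ℝ} (hk : k ∈ Set.Ioo (0:ℝ) (1/2)) :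
    0 < ahat θ k := by
  rw [ahat]
  have h0 : 0 < sin (π * k * (((0:ℕ):ℝ)+1)) ^ 2 / (((0:ℕ):ℝ)+1) ^ θ := by
    simp only [Nat.cast_zero, zero_add, mul_one, Real.one_rpow]
    have hs : 0 < sin (π * k) := by
      apply Real.sin_pos_of_pos_of_lt_pi
      · exact mul_pos Real.pi_pos hk.1
      · nlinarith [Real.pi_pos, hk.2]
    positivity
  have := Summable.tsum_pos (ahat_term_summable hθ k) (fun x => by positivity) 0 h0
  linarith

lemma tendsto_sin_div (c : ℝ) :
    Tendsto (fun k : ℝ => sin (c * k) / k) (𝓝[≠] (0:ℝ)) (𝓝 c) := by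
  have h : HasDerivAt (fun k : ℝ => sin (c * k)) c 0 := by
    simpa using ((hasDerivAt_id (0:ℝ)).const_mul c).sin
  have := hasDerivAt_iff_tendsto_slope.mp h
  apply this.congr
  intro k
  simp [slope_fun_def, div_eq_inv_mul]

lemma rpow_ratio (θ : ℝ) (x : ℕ) :
    ((x:ℝ)+1) / ((x:ℝ)+1)^(θ-1) = ((x:ℝ)+1)^(2-θ) := by
  have hb := base_pos x
  have h : ((x:ℝ)+1)^(2-θ) = ((x:ℝ)+1)^((1:ℝ)) / ((x:ℝ)+1)^(θ-1) := by
    rw [← Real.rpow_sub hb]; congr 1; ring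
  rw [h, Real.rpow_one]

lemma rpow_ratio2 (θ : ℝ) (x : ℕ) :
    ((x:ℝ)+1)^2 / ((x:ℝ)+1)^θ = ((x:ℝ)+1)^(2-θ) := by
  have hb := base_pos x
  rw [Real.rpow_sub hb, show ((x:ℝ)+1)^((2:ℝ)) = ((x:ℝ)+1)^(2:ℕ) by
    rw [← Real.rpow_natCast]; norm_num]

lemma summable_two_sub {θ : ℝ} (hθ : 3 < θ) :
    Summable (fun x : ℕ => ((x:ℝ)+1)^(2-θ)) := by
  have : Summable (fun x : ℕ => ((x:ℝ)+1)^(-(θ-2))) := summable_rpow_shift (by linarith)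
  simpa [show -(θ-2) = 2-θ by ring] using this

lemma tendsto_G {θ : ℝ} (hθ : 3 < θ) :
    Tendsto (fun k : ℝ => ahatD θ k / k) (𝓝[>] (0:ℝ))
      (𝓝 (4*π * ∑' x : ℕ, 2*π*((x:ℝ)+1)^(2-θ))) := by
  have key := tendsto_tsum_of_dominated_convergence
    (𝓕 := 𝓝[>] (0:ℝ))
    (f := fun (k:ℝ) (x:ℕ) => sin (2*π*k*((x:ℝ)+1))/((x:ℝ)+1)^(θ-1) / k)
    (g := fun x : ℕ => 2*π*((x:ℝ)+1)^(2-θ))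
    (bound := fun x : ℕ => 2*π*((x:ℝ)+1)^(2-θ))
    ((summable_two_sub hθ).mul_left (2*π))
    (by
      intro x
      have hb := base_pos x
      have h := (tendsto_sin_div (2*π*((x:ℝ)+1))).mono_left
        (nhdsWithin_mono _ fun y hy => (Set.mem_compl_singleton_iff).mpr (ne_of_gt hy))
      have h2 := h.div_const (((x:ℝ)+1)^(θ-1))
      have heq : 2*π*((x:ℝ)+1) / ((x:ℝ)+1)^(θ-1) = 2*π*((x:ℝ)+1)^(2-θ) := by
        rw [mul_div_assoc, rpow_ratio]
      rw [heq] at h2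
      apply h2.congr
      intro k
      rw [show 2*π*((x:ℝ)+1)*k = 2*π*k*((x:ℝ)+1) by ring, div_right_comm])
    (by
      filter_upwards [self_mem_nhdsWithin] with k hk
      intro x
      have hk0 : (0:ℝ) < k := hk
      have hb := base_pos x
      have hd : (0:ℝ) < ((x:ℝ)+1)^(θ-1) := Real.rpow_pos_of_pos hb _
      rw [Real.norm_eq_abs, abs_div, abs_div, abs_of_pos hk0, abs_of_pos hd]
      have hs : |sin (2*π*k*((x:ℝ)+1))| ≤ 2*π*k*((x:ℝ)+1) := by
        exact (Real.abs_sin_le_abs).trans_eq (abs_of_nonneg (by positivity))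
      calc |sin (2*π*k*((x:ℝ)+1))| / ((x:ℝ)+1)^(θ-1) / k
          ≤ (2*π*k*((x:ℝ)+1)) / ((x:ℝ)+1)^(θ-1) / k := by gcongr
        _ = 2*π*(((x:ℝ)+1) / ((x:ℝ)+1)^(θ-1)) := by field_simp
        _ = 2*π*((x:ℝ)+1)^(2-θ) := by rw [rpow_ratio])
  have key2 := key.const_mul (4*π)
  rw [tsum_mul_left] at key2 ⊢
  apply key2.congr
  intro k
  rw [ahatD, mul_div_assoc, tsum_div_const]

lemma tendsto_H {θ : ℝ} (hθ : 3 < θ) :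
    Tendsto (fun k : ℝ => ahat θ k / k^2) (𝓝[>] (0:ℝ))
      (𝓝 (4 * ∑' x : ℕ, π^2*((x:ℝ)+1)^(2-θ))) := by
  have key := tendsto_tsum_of_dominated_convergence
    (𝓕 := 𝓝[>] (0:ℝ))
    (f := fun (k:ℝ) (x:ℕ) => sin (π*k*((x:ℝ)+1))^2/((x:ℝ)+1)^θ / k^2)
    (g := fun x : ℕ => π^2*((x:ℝ)+1)^(2-θ))
    (bound := fun x : ℕ => π^2*((x:ℝ)+1)^(2-θ))
    ((summable_two_sub hθ).mul_left (π^2))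
    (by
      intro x
      have hb := base_pos x
      have h := (tendsto_sin_div (π*((x:ℝ)+1))).mono_left
        (nhdsWithin_mono _ fun y hy => (Set.mem_compl_singleton_iff).mpr (ne_of_gt hy))
      have h2 := (h.pow 2).div_const (((x:ℝ)+1)^θ)
      have heq : (π*((x:ℝ)+1))^2 / ((x:ℝ)+1)^θ = π^2*((x:ℝ)+1)^(2-θ) := by
        rw [mul_pow, mul_div_assoc, rpow_ratio2]
      rw [heq] at h2
      apply h2.congr
      intro k
      rw [show π*((x:ℝ)+1)*k = π*k*((x:ℝ)+1) by ring, div_pow, div_right_comm])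
    (by
      filter_upwards [self_mem_nhdsWithin] with k hk
      intro x
      have hk0 : (0:ℝ) < k := hk
      have hb := base_pos x
      have hd : (0:ℝ) < ((x:ℝ)+1)^θ := Real.rpow_pos_of_pos hb _
      rw [Real.norm_eq_abs, abs_of_nonneg (by positivity)]
      calc sin (π*k*((x:ℝ)+1))^2 / ((x:ℝ)+1)^θ / k^2
          ≤ (π*k*((x:ℝ)+1))^2 / ((x:ℝ)+1)^θ / k^2 := by
            gcongr ?_ / _ / _
            exact Real.sin_sq_le_sq
        _ = π^2*(((x:ℝ)+1)^2 / ((x:ℝ)+1)^θ) := by field_simp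
        _ = π^2*((x:ℝ)+1)^(2-θ) := by rw [rpow_ratio2])
  have key2 := key.const_mul (4:ℝ)
  rw [tsum_mul_left] at key2 ⊢
  apply key2.congr
  intro k
  rw [ahat, mul_div_assoc, tsum_div_const]

theorem stmt10 (θ : ℝ) (hθ : 3 < θ) :
    (∀ k ∈ Set.Ioo (0 : ℝ) (1 / 2),
      HasDerivAt (disp θ) (ahatD θ k / (2 * Real.sqrt (ahat θ k))) k) ∧
    Filter.Tendsto (fun k : ℝ => deriv (disp θ) k)
      (nhdsWithin 0 (Set.Ioi 0)) (nhds (Real.sqrt (Cθ3 θ))) := by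
  have hmain : ∀ k ∈ Set.Ioo (0 : ℝ) (1 / 2),
      HasDerivAt (disp θ) (ahatD θ k / (2 * Real.sqrt (ahat θ k))) k := by
    intro k hk
    have hpos := ahat_pos hθ hk
    have h1 := (Real.hasDerivAt_sqrt hpos.ne').comp k (ahat_hasDerivAt hθ k)
    have hval : ahatD θ k / (2 * Real.sqrt (ahat θ k))
        = 1 / (2 * Real.sqrt (ahat θ k)) * ahatD θ k := by ring
    rw [hval]
    exact h1
  refine ⟨hmain, ?_⟩
  have hCsum := summable_two_sub hθ
  have hCpos : 0 < Cθ3 θ := by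
    rw [Cθ3]
    have hterm : (0:ℝ) < (((0:ℕ):ℝ)+1)^(2-θ) := Real.rpow_pos_of_pos (base_pos 0) _
    have hts := Summable.tsum_pos hCsum (fun x => (Real.rpow_pos_of_pos (base_pos x) _).le) 0 hterm
    have h4 : (0:ℝ) < 4*π^2 := by positivity
    exact mul_pos h4 hts
  have hGval : 4*π * ∑' x : ℕ, 2*π*((x:ℝ)+1)^(2-θ) = 2 * Cθ3 θ := by
    rw [tsum_mul_left, Cθ3]; ring
  have hHval : 4 * ∑' x : ℕ, π^2*((x:ℝ)+1)^(2-θ) = Cθ3 θ := by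
    rw [tsum_mul_left, Cθ3]; ring
  have hG := tendsto_G hθ; rw [hGval] at hG
  have hH := tendsto_H hθ; rw [hHval] at hH
  have hsq : Tendsto (fun k : ℝ => Real.sqrt (ahat θ k / k^2)) (𝓝[>] (0:ℝ))
      (𝓝 (Real.sqrt (Cθ3 θ))) := (Real.continuous_sqrt.tendsto _).comp hH
  have hden := hsq.const_mul (2:ℝ)
  have hne : (2:ℝ) * Real.sqrt (Cθ3 θ) ≠ 0 :=
    mul_ne_zero two_ne_zero (Real.sqrt_pos.mpr hCpos).ne'
  have hdiv := hG.div hden hne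
  have hlim : (2 * Cθ3 θ) / (2 * Real.sqrt (Cθ3 θ)) = Real.sqrt (Cθ3 θ) := by
    rw [mul_div_mul_left _ _ (two_ne_zero), Real.div_sqrt]
  rw [hlim] at hdiv
  refine Filter.Tendsto.congr' ?_ hdiv
  filter_upwards [Ioo_mem_nhdsGT_of_mem
    (show (0:ℝ) ∈ Set.Ico (0:ℝ) (1/2) by constructor <;> norm_num)] with k hk
  have hk0 : 0 < k := hk.1
  have hder := (hmain k hk).deriv
  rw [hder]
  simp only [Pi.div_apply]
  have hs : Real.sqrt (ahat θ k / k^2) = Real.sqrt (ahat θ k) / k := by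
    rw [Real.sqrt_div (ahat_nonneg θ k), Real.sqrt_sq hk0.le]
  rw [hs]
  rcases eq_or_ne (Real.sqrt (ahat θ k)) 0 with h0 | h0
  · rw [h0]; simp
  · field_simp
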